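/- Let X₁ and X₂ be finite sets, X = X₁ ∪ X₂, Y = X₁ ∩ X₂. Let z ∈ Z(X) and z̄ ∈ Z(X₁) be such that π_{X→Y}(z) = π_{X₁→Y}(z̄). Then there exists z' ∈ Z(X) such that π_{X→X₁}(z') = z̄, π_{X→X₂}(z') = π_{X→X₂}(z), and ‖z - z'‖₁ = ‖π_{X→X₁}(z) - z̄‖₁. -/

import Mathlib

open Finset

/-- `ZL S` is the integral lattice with basis indexed by binary labelings of the
finite set `S`. -/
abbrev ZL {V : Type} (S : Finset V) : Type := ({x // x ∈ S} → Bool) → ℤ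

/-- The projection `π_{S → T}` for `T ⊆ S`: the linear extension of `e_a ↦ e_{a|_T}`. -/
noncomputable def projZ {V : Type} [Fintype V] [DecidableEq V] {S T : Finset V}
    (h : T ⊆ S) (z : ZL S) : ZL T := fun b =>
  ∑ a : {x // x ∈ S} → Bool,
    if ∀ x : {x // x ∈ T}, a ⟨x.1, h x.2⟩ = b x then z a else 0

/-- The ℓ₁-norm on `ZL S` with respect to the standard basis. -/
noncomputable def l1Z {V : Type} [Fintype V] [DecidableEq V] {S : Finset V}
    (z : ZL S) : ℤ := ∑ a, |z a|

variable {V : Type} [Fintype V] [DecidableEq V]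

lemma projZ_sub {S T : Finset V} (h : T ⊆ S) (z₁ z₂ : ZL S) :
    projZ h (z₁ - z₂) = projZ h z₁ - projZ h z₂ := by
  funext b
  simp only [projZ, Pi.sub_apply, ← Finset.sum_sub_distrib]
  refine Finset.sum_congr rfl fun a _ => ?_
  split <;> simp

lemma projZ_comp {S T U : Finset V} (h₁ : T ⊆ S) (h₂ : U ⊆ T) (z : ZL S) :
    projZ h₂ (projZ h₁ z) = projZ (h₂.trans h₁) z := by
  funext b
  simp only [projZ]
  have step : ∀ b' : {x // x ∈ T} → Bool,
      (if ∀ x : {x // x ∈ U}, b' ⟨x.1, h₂ x.2⟩ = b x then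
        (∑ a : {x // x ∈ S} → Bool,
          if ∀ x : {x // x ∈ T}, a ⟨x.1, h₁ x.2⟩ = b' x then z a else 0) else 0)
      = ∑ a : {x // x ∈ S} → Bool,
          (if ∀ x : {x // x ∈ U}, b' ⟨x.1, h₂ x.2⟩ = b x then
            (if ∀ x : {x // x ∈ T}, a ⟨x.1, h₁ x.2⟩ = b' x then z a else 0) else 0) := by
    intro b'; split <;> simp
  simp only [step]
  rw [Finset.sum_comm]
  refine Finset.sum_congr rfl fun a _ => ?_
  rw [Finset.sum_eq_single (fun x : {x // x ∈ T} => a ⟨x.1, h₁ x.2⟩)]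
  · rw [if_pos (fun _ => rfl)]
  · intro b' _ hne
    by_cases hm : ∀ x : {x // x ∈ T}, a ⟨x.1, h₁ x.2⟩ = b' x
    · exact absurd (funext fun x => (hm x).symm) hne
    · rw [if_neg hm, ite_self]
  · simp

/-- Decompose a labeling of `X₁ ∪ X₂` into its restriction to `X₁` and its values
outside `X₁`. -/
def splitEquiv (X₁ X₂ : Finset V) :
    ({x // x ∈ X₁ ∪ X₂} → Bool) ≃
      (({x // x ∈ X₁} → Bool) × ({p : {x // x ∈ X₁ ∪ X₂} // p.1 ∉ X₁} → Bool)) where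
  toFun a := (fun y => a ⟨y.1, subset_union_left y.2⟩, fun p => a p.1)
  invFun bc x := if h : x.1 ∈ X₁ then bc.1 ⟨x.1, h⟩ else bc.2 ⟨x, h⟩
  left_inv a := by
    funext x
    dsimp only
    split <;> rfl
  right_inv bc := by
    refine Prod.ext (funext fun y => ?_) (funext fun p => ?_)
    · exact dif_pos y.2
    · exact dif_neg p.2

open Classical in
/-- The correction term: mass `w b` placed on the labeling extending `b` by `false`
outside `X₁`. -/
noncomputable def glueU (X₁ X₂ : Finset V) (w : ZL X₁) : ZL (X₁ ∪ X₂) := fun a =>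
  if (fun p : {p : {x // x ∈ X₁ ∪ X₂} // p.1 ∉ X₁} => a p.1) = (fun _ => false)
  then w (fun y => a ⟨y.1, subset_union_left y.2⟩) else 0

lemma splitEquiv_symm_apply (X₁ X₂ : Finset V)
    (bc : ({x // x ∈ X₁} → Bool) × ({p : {x // x ∈ X₁ ∪ X₂} // p.1 ∉ X₁} → Bool))
    (x : {x // x ∈ X₁ ∪ X₂}) :
    (splitEquiv X₁ X₂).symm bc x
      = if h : x.1 ∈ X₁ then bc.1 ⟨x.1, h⟩ else bc.2 ⟨x, h⟩ := rfl

lemma splitEquiv_symm_fst (X₁ X₂ : Finset V) (b : {x // x ∈ X₁} → Bool)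
    (t : {p : {x // x ∈ X₁ ∪ X₂} // p.1 ∉ X₁} → Bool) (y : {x // x ∈ X₁}) :
    (splitEquiv X₁ X₂).symm (b, t) ⟨y.1, subset_union_left y.2⟩ = b y := by
  rw [splitEquiv_symm_apply]; exact dif_pos y.2

lemma glueU_symm (X₁ X₂ : Finset V) (w : ZL X₁) (b : {x // x ∈ X₁} → Bool)
    (t : {p : {x // x ∈ X₁ ∪ X₂} // p.1 ∉ X₁} → Bool) :
    glueU X₁ X₂ w ((splitEquiv X₁ X₂).symm (b, t))
      = if t = (fun _ => false) then w b else 0 := by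
  have h1 : (fun p : {p : {x // x ∈ X₁ ∪ X₂} // p.1 ∉ X₁} =>
      (splitEquiv X₁ X₂).symm (b, t) p.1) = t :=
    funext fun p => by rw [splitEquiv_symm_apply]; exact dif_neg p.2
  have h2 : (fun y : {x // x ∈ X₁} =>
      (splitEquiv X₁ X₂).symm (b, t) ⟨y.1, subset_union_left y.2⟩) = b :=
    funext fun y => splitEquiv_symm_fst X₁ X₂ b t y
  rw [glueU, h1, h2]

lemma glueU_proj_left (X₁ X₂ : Finset V) (w : ZL X₁) :
    projZ subset_union_left (glueU X₁ X₂ w) = w := by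
  classical
  funext b
  rw [projZ]
  rw [Fintype.sum_equiv (splitEquiv X₁ X₂)
      (fun a => if ∀ y : {x // x ∈ X₁}, a ⟨y.1, subset_union_left y.2⟩ = b y
        then glueU X₁ X₂ w a else 0)
      (fun p => if (∀ y : {x // x ∈ X₁},
          (splitEquiv X₁ X₂).symm p ⟨y.1, subset_union_left y.2⟩ = b y)
        then glueU X₁ X₂ w ((splitEquiv X₁ X₂).symm p) else 0)
      (fun a => by rw [Equiv.symm_apply_apply])]
  rw [Fintype.sum_prod_type]
  refine (Finset.sum_eq_single b (fun b' _ hne => ?_)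
      (fun h => absurd (Finset.mem_univ b) h)).trans ?_
  · refine Finset.sum_eq_zero fun t _ => ?_
    rw [if_neg]
    intro hcon
    exact hne (funext fun y => by
      rw [← hcon y]; exact (splitEquiv_symm_fst X₁ X₂ b' t y).symm ▸
        (splitEquiv_symm_fst X₁ X₂ b' t y).symm)
  · have : (∑ t : {p : {x // x ∈ X₁ ∪ X₂} // p.1 ∉ X₁} → Bool,
        if (∀ y : {x // x ∈ X₁},
            (splitEquiv X₁ X₂).symm (b, t) ⟨y.1, subset_union_left y.2⟩ = b y)
          then glueU X₁ X₂ w ((splitEquiv X₁ X₂).symm (b, t)) else 0)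
        = ∑ t : {p : {x // x ∈ X₁ ∪ X₂} // p.1 ∉ X₁} → Bool,
            if t = (fun _ => false) then w b else 0 :=
      Finset.sum_congr rfl fun t _ => by
        rw [if_pos (fun y => splitEquiv_symm_fst X₁ X₂ b t y), glueU_symm]
    rw [this]
    simp

lemma glueU_proj_right (X₁ X₂ : Finset V) (w : ZL X₁)
    (hwY : projZ (T := X₁ ∩ X₂) inter_subset_left w = 0) :
    projZ subset_union_right (glueU X₁ X₂ w) = 0 := by
  classical
  funext c
  rw [projZ, Pi.zero_apply]
  rw [Fintype.sum_equiv (splitEquiv X₁ X₂)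
      (fun a => if ∀ x : {x // x ∈ X₂}, a ⟨x.1, subset_union_right x.2⟩ = c x
        then glueU X₁ X₂ w a else 0)
      (fun p => if (∀ x : {x // x ∈ X₂},
          (splitEquiv X₁ X₂).symm p ⟨x.1, subset_union_right x.2⟩ = c x)
        then glueU X₁ X₂ w ((splitEquiv X₁ X₂).symm p) else 0)
      (fun a => by rw [Equiv.symm_apply_apply])]
  rw [Fintype.sum_prod_type]
  have hin : ∀ b : {x // x ∈ X₁} → Bool,
      (∑ t : {p : {x // x ∈ X₁ ∪ X₂} // p.1 ∉ X₁} → Bool,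
        if (∀ x : {x // x ∈ X₂},
            (splitEquiv X₁ X₂).symm (b, t) ⟨x.1, subset_union_right x.2⟩ = c x)
          then glueU X₁ X₂ w ((splitEquiv X₁ X₂).symm (b, t)) else 0)
      = if (∀ x : {x // x ∈ X₂},
            (splitEquiv X₁ X₂).symm (b, fun _ => false) ⟨x.1, subset_union_right x.2⟩
              = c x)
          then w b else 0 := by
    intro b
    refine (Finset.sum_eq_single (fun _ => false) (fun t _ hne => ?_)
        (fun h => absurd (Finset.mem_univ _) h)).trans ?_
    · rw [glueU_symm, if_neg hne, ite_self]
    · rw [glueU_symm, if_pos rfl]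
  simp only [hin]
  by_cases hc : ∀ x : {x // x ∈ X₂}, x.1 ∉ X₁ → c x = false
  · have hiff : ∀ b : {x // x ∈ X₁} → Bool,
        ((∀ x : {x // x ∈ X₂},
            (splitEquiv X₁ X₂).symm (b, fun _ => false) ⟨x.1, subset_union_right x.2⟩
              = c x)
          ↔ ∀ y : {x // x ∈ X₁ ∩ X₂},
              b ⟨y.1, inter_subset_left y.2⟩ = c ⟨y.1, inter_subset_right y.2⟩) := by
      intro b
      constructor
      · intro H y
        have h1 := H ⟨y.1, inter_subset_right y.2⟩
        rw [splitEquiv_symm_apply] at h1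
        dsimp only at h1
        rw [dif_pos (inter_subset_left y.2)] at h1
        exact h1
      · intro H x
        rw [splitEquiv_symm_apply]
        by_cases h : x.1 ∈ X₁
        · rw [dif_pos h]
          exact H ⟨x.1, Finset.mem_inter.2 ⟨h, x.2⟩⟩
        · rw [dif_neg h]
          exact (hc x h).symm
    refine Eq.trans (Finset.sum_congr rfl fun b _ => if_congr (hiff b) rfl rfl) ?_
    simpa [projZ] using congrFun hwY (fun y : {x // x ∈ X₁ ∩ X₂} =>
      c ⟨y.1, inter_subset_right y.2⟩)
  · refine Finset.sum_eq_zero fun b _ => ?_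
    rw [if_neg]
    intro H
    push_neg at hc
    obtain ⟨x, hx1, hx2⟩ := hc
    have h1 := H x
    rw [splitEquiv_symm_apply, dif_neg hx1] at h1
    exact hx2 h1.symm

lemma glueU_l1 (X₁ X₂ : Finset V) (w : ZL X₁) :
    l1Z (glueU X₁ X₂ w) = l1Z w := by
  classical
  rw [l1Z, l1Z]
  rw [Fintype.sum_equiv (splitEquiv X₁ X₂)
      (fun a => |glueU X₁ X₂ w a|)
      (fun p => |glueU X₁ X₂ w ((splitEquiv X₁ X₂).symm p)|)
      (fun a => by rw [Equiv.symm_apply_apply])]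
  rw [Fintype.sum_prod_type]
  refine Finset.sum_congr rfl fun b _ => ?_
  simp only [glueU_symm, apply_ite abs, abs_zero]
  simp

theorem glue_cutsame {V : Type} [Fintype V] [DecidableEq V] (X₁ X₂ : Finset V)
    (z : ZL (X₁ ∪ X₂)) (zbar : ZL X₁)
    (hmatch : projZ (T := X₁ ∩ X₂) (inter_subset_left.trans subset_union_left) z
      = projZ (T := X₁ ∩ X₂) inter_subset_left zbar) :
    ∃ z' : ZL (X₁ ∪ X₂),
      projZ subset_union_left z' = zbar ∧
      projZ subset_union_right z' = projZ subset_union_right z ∧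
      l1Z (z - z') = l1Z (projZ subset_union_left z - zbar) := by
  classical
  set w : ZL X₁ := projZ subset_union_left z - zbar with hwdef
  have hwY : projZ (T := X₁ ∩ X₂) inter_subset_left w = 0 := by
    rw [hwdef, projZ_sub, projZ_comp, hmatch, sub_self]
  refine ⟨z - glueU X₁ X₂ w, ?_, ?_, ?_⟩
  · rw [projZ_sub, glueU_proj_left, hwdef, sub_sub_cancel]
  · rw [projZ_sub, glueU_proj_right X₁ X₂ w hwY, sub_zero]
  · rw [sub_sub_cancel, glueU_l1]
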